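/- In the Kenyon setting, with d_{jn} forming a complete residue system modulo s for each n, uniform probabilities p_{jn} = 1/s, and ψ = Σ_k ψ_k s^{-k}, the CDF F_ψ satisfies F_ψ((r+1)/s^n) − F_ψ(r/s^n) ≤ 1/s^n for all integers r and all n ≥ 1 with (r)/s^n in the closure of the support. -/

import Mathlib

open MeasureTheory ProbabilityTheory
open scoped ENNReal

def kenyonN (s : ℕ) (d : Fin s → ℕ → ℤ) : ∀ n : ℕ, (Fin n → Fin s) → ℤ
  | 0, _ => 0
  | n+1, v => s * kenyonN s d n (fun k : Fin n => v k.castSucc) + d (v (Fin.last n)) (n+1)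

lemma kenyonN_inj (s : ℕ) (hs : 2 ≤ s) (d : Fin s → ℕ → ℤ)
    (hres : ∀ m : ℕ, Function.Injective (fun j : Fin s => (d j m : ZMod s))) :
    ∀ n : ℕ, Function.Injective (kenyonN s d n) := by
  intro n
  induction n with
  | zero => intro v w _; funext k; exact k.elim0
  | succ n ih =>
    intro v w h
    have hcast : ∀ u : Fin (n+1) → Fin s,
        ((kenyonN s d (n+1) u : ℤ) : ZMod s) = ((d (u (Fin.last n)) (n+1) : ℤ) : ZMod s) := by
      intro u
      show ((s * kenyonN s d n (fun k : Fin n => u k.castSucc) + d (u (Fin.last n)) (n+1) : ℤ) : ZMod s) = _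
      push_cast
      simp [ZMod.natCast_self]
    have hlast : v (Fin.last n) = w (Fin.last n) := by
      apply hres (n+1)
      have := hcast v
      rw [h, hcast w] at this
      simpa using this.symm
    have hrest : (fun k : Fin n => v k.castSucc) = (fun k : Fin n => w k.castSucc) := by
      apply ih
      have h' : (s : ℤ) * kenyonN s d n (fun k : Fin n => v k.castSucc)
          = (s : ℤ) * kenyonN s d n (fun k : Fin n => w k.castSucc) := by
        have hv : kenyonN s d (n+1) v
            = s * kenyonN s d n (fun k : Fin n => v k.castSucc) + d (v (Fin.last n)) (n+1) := rfl
        have hw : kenyonN s d (n+1) w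
            = s * kenyonN s d n (fun k : Fin n => w k.castSucc) + d (w (Fin.last n)) (n+1) := rfl
        rw [hv, hw, hlast] at h
        omega
      have hs0 : (s : ℤ) ≠ 0 := by positivity
      exact mul_left_cancel₀ hs0 h'
    funext k
    refine Fin.lastCases hlast (fun i => ?_) k
    exact congrFun hrest i

lemma kenyonN_eq (s : ℕ) (hs : 2 ≤ s) (d : Fin s → ℕ → ℤ) :
    ∀ (n : ℕ) (v : Fin n → Fin s),
      ((kenyonN s d n v : ℤ) : ℝ)
        = (s : ℝ) ^ n * ∑ k : Fin n, (d (v k) ((k : ℕ) + 1) : ℝ) / (s : ℝ) ^ ((k : ℕ) + 1) := by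
  have hs0 : (s : ℝ) ≠ 0 := by positivity
  intro n
  induction n with
  | zero => intro v; simp [kenyonN]
  | succ n ih =>
    intro v
    have hv : kenyonN s d (n+1) v
        = s * kenyonN s d n (fun k : Fin n => v k.castSucc) + d (v (Fin.last n)) (n+1) := rfl
    rw [hv]
    push_cast
    rw [ih (fun k : Fin n => v k.castSucc), Fin.sum_univ_castSucc]
    have hpow : (s : ℝ) ^ (n + 1) ≠ 0 := by positivity
    field_simp
    simp only [Fin.val_last, Fin.val_castSucc]
    ring

set_option maxHeartbeats 1000000 in
/-- Kenyon setting: the CDF of `ψ` increases by at most `1/s^n` on dyadic-type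
intervals `[r/s^n, (r+1)/s^n]` with left endpoint in the set of subsums `M`. -/
theorem stmt15 {Ω : Type*} [MeasureSpace Ω] [IsProbabilityMeasure (ℙ : Measure Ω)]
    (s : ℕ) (hs : 2 ≤ s) (L : ℝ) (hL : 0 < L)
    (d : Fin s → ℕ → ℤ)
    (hres : ∀ n : ℕ, Function.Bijective (fun j : Fin s => (d j n : ZMod s)))
    (hmono : ∀ n : ℕ, StrictMono (fun j : Fin s => d j n))
    (hzero : ∀ n : ℕ, d ⟨0, by omega⟩ n = 0)
    (hbd : ∀ (j : Fin s) (n : ℕ), (d j n : ℝ) ≤ L)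
    (ψk : ℕ → Ω → ℝ) (hmeas : ∀ k, Measurable (ψk k))
    (hindep : iIndepFun ψk (ℙ : Measure Ω))
    (hval : ∀ (j : Fin s) (k : ℕ),
      (ℙ : Measure Ω) {ω | ψk k ω = (d j (k + 1) : ℝ)} = 1 / s)
    (hrange : ∀ (k : ℕ) (ω : Ω), ∃ j : Fin s, ψk k ω = (d j (k + 1) : ℝ))
    (ψ : Ω → ℝ) (hψ : ∀ ω, ψ ω = ∑' k : ℕ, ψk k ω / (s : ℝ) ^ (k + 1))
    (F : ℝ → ℝ) (hF : ∀ x, F x = ((ℙ : Measure Ω) {ω | ψ ω < x}).toReal)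
    (M : Set ℝ)
    (hM : M = {x : ℝ | ∃ j : ℕ → Fin s,
      HasSum (fun n : ℕ => (d (j n) (n + 1) : ℝ) / (s : ℝ) ^ (n + 1)) x}) :
    ∀ (r : ℤ) (n : ℕ), 1 ≤ n → ((r : ℝ) / (s : ℝ) ^ n) ∈ M →
      F (((r : ℝ) + 1) / (s : ℝ) ^ n) - F ((r : ℝ) / (s : ℝ) ^ n) ≤ 1 / (s : ℝ) ^ n := by
  intro r n hn _
  classical
  have hle : ∀ i : ℕ, MeasurableSpace.comap (ψk i) inferInstance
      ≤ (inferInstance : MeasurableSpace Ω) := fun i => (hmeas i).comap_le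
  have hs2 : (2:ℝ) ≤ (s:ℝ) := by exact_mod_cast hs
  have hspos : (0:ℝ) < (s:ℝ) := by linarith
  have hs0 : (s:ℝ) ≠ 0 := ne_of_gt hspos
  have hpowpos : (0:ℝ) < (s:ℝ)^n := pow_pos hspos n
  set a : ℝ := (r:ℝ) / (s:ℝ)^n with ha
  have hb : ((r:ℝ)+1)/(s:ℝ)^n = a + 1/(s:ℝ)^n := by rw [add_div]
  -- digit bounds
  have hd0 : ∀ (j : Fin s) (m : ℕ), (0:ℤ) ≤ d j m := by
    intro j m
    have h0 : (⟨0, by omega⟩ : Fin s) ≤ j := by simp [Fin.le_def]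
    have := (hmono m).monotone h0
    simpa [hzero m] using this
  have hψk_nonneg : ∀ (k : ℕ) (ω : Ω), 0 ≤ ψk k ω := by
    intro k ω
    obtain ⟨j, hj⟩ := hrange k ω
    rw [hj]; exact_mod_cast hd0 j (k+1)
  have hψk_le : ∀ (k : ℕ) (ω : Ω), ψk k ω ≤ L := by
    intro k ω
    obtain ⟨j, hj⟩ := hrange k ω
    rw [hj]; exact hbd j (k+1)
  -- summability
  have hsum : ∀ ω : Ω, Summable (fun k : ℕ => ψk k ω / (s:ℝ)^(k+1)) := by
    intro ω
    have hgeo : Summable (fun k : ℕ => L * (1/(s:ℝ))^k) :=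
      (summable_geometric_of_lt_one (r := 1/(s:ℝ)) (by positivity)
        (by rw [div_lt_one hspos]; linarith)).mul_left L
    refine Summable.of_nonneg_of_le (fun k => div_nonneg (hψk_nonneg k ω) (by positivity)) (fun k => ?_) hgeo
    calc ψk k ω / (s:ℝ)^(k+1) ≤ L / (s:ℝ)^(k+1) := by gcongr; exact hψk_le k ω
      _ ≤ L / (s:ℝ)^k := by
          apply div_le_div_of_nonneg_left hL.le (pow_pos hspos k)
          apply pow_le_pow_right₀ (by linarith) (Nat.le_succ k)
      _ = L * (1/(s:ℝ))^k := by rw [one_div, inv_pow, div_eq_mul_inv]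
  -- measurability of ψ
  have hψmeas : Measurable ψ := by
    have htend : ∀ ω : Ω, Filter.Tendsto
        (fun N => ∑ k ∈ Finset.range N, ψk k ω / (s:ℝ)^(k+1))
        Filter.atTop (nhds (ψ ω)) := by
      intro ω; rw [hψ ω]; exact ((hsum ω).hasSum).tendsto_sum_nat
    exact measurable_of_tendsto_metrizable
      (fun N => Finset.measurable_sum _ (fun k _ => ((hmeas k).div_const _)))
      (tendsto_pi_nhds.2 htend)
  -- tail function
  set T : Ω → ℝ := fun ω => ∑' k : ℕ, ψk (k + n) ω / (s:ℝ)^((k + n) + 1) with hTdef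
  have hsumT : ∀ ω : Ω, Summable (fun k : ℕ => ψk (k + n) ω / (s:ℝ)^((k + n) + 1)) :=
    fun ω => (summable_nat_add_iff n).2 (hsum ω)
  have hsplit : ∀ ω : Ω, ψ ω = (∑ k ∈ Finset.range n, ψk k ω / (s:ℝ)^(k+1)) + T ω := by
    intro ω
    rw [hψ ω, ← (hsum ω).sum_add_tsum_nat_add n]
  -- sigma-algebras
  have hU' : ∀ (g : (Fin n → Fin s) → Set Ω), Pairwise (Function.onFun Disjoint g) →
      (∀ v, MeasurableSet (g v)) → ∑' v, ℙ (g v) = ℙ (⋃ v, g v) :=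
    fun g h1 h2 => (measure_iUnion h1 h2).symm
  set t : Set ℕ := {i | i < n} with htdef
  have hmBle : (⨆ i ∈ tᶜ, MeasurableSpace.comap (ψk i) inferInstance)
      ≤ (inferInstance : MeasurableSpace Ω) :=
    iSup₂_le fun i _ => (hmeas i).comap_le
  set mA : MeasurableSpace Ω := ⨆ i ∈ t, MeasurableSpace.comap (ψk i) inferInstance with hmA
  set mB : MeasurableSpace Ω := ⨆ i ∈ tᶜ, MeasurableSpace.comap (ψk i) inferInstance with hmB
  have hIndep : Indep mA mB ℙ := indep_biSup_compl hle hindep.iIndep t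
  have hψkmB : ∀ k : ℕ, k ∈ tᶜ → Measurable[mB] (ψk k) := fun k hk =>
    measurable_iff_comap_le.2 (le_iSup₂
      (f := fun (i : ℕ) (_ : i ∈ tᶜ) => MeasurableSpace.comap (ψk i) inferInstance) k hk)
  have hTmB : Measurable[mB] T := by
    have htend : ∀ ω : Ω, Filter.Tendsto
        (fun N => ∑ k ∈ Finset.range N, ψk (k + n) ω / (s:ℝ)^((k + n) + 1))
        Filter.atTop (nhds (T ω)) := fun ω => ((hsumT ω).hasSum).tendsto_sum_nat
    exact measurable_of_tendsto_metrizable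
      (fun N => Finset.measurable_sum _ (fun k _ =>
        ((hψkmB (k + n) (by simp only [htdef, Set.mem_compl_iff, Set.mem_setOf_eq]; omega)).div_const _)))
      (tendsto_pi_nhds.2 htend)
  -- prefix data
  set Sv : (Fin n → Fin s) → ℝ :=
    fun v => ∑ k : Fin n, ((d (v k) ((k:ℕ)+1) : ℤ) : ℝ) / (s:ℝ)^((k:ℕ)+1) with hSv
  set cv : (Fin n → Fin s) → ℕ → ℝ :=
    (fun v i => if h : i < n then ((d (v ⟨i, h⟩) (i+1) : ℤ) : ℝ) else 0) with hcv
  have hcvlt : ∀ (v : Fin n → Fin s) (i : ℕ) (h : i < n),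
      cv v i = ((d (v ⟨i, h⟩) (i+1) : ℤ) : ℝ) := fun v i h => dif_pos h
  set A : (Fin n → Fin s) → Set Ω :=
    (fun v => ⋂ i ∈ Finset.range n, {ω | ψk i ω = cv v i}) with hA
  set B : (Fin n → Fin s) → Set Ω :=
    (fun v => T ⁻¹' (Set.Ico (a - Sv v) (a + 1/(s:ℝ)^n - Sv v))) with hB
  set E : Set Ω := {ω | a ≤ ψ ω ∧ ψ ω < a + 1/(s:ℝ)^n} with hEdef
  -- covering
  have hcover : E ⊆ ⋃ v : Fin n → Fin s, (A v ∩ B v) := by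
    intro ω hω
    obtain ⟨h1, h2⟩ := hω
    set v : Fin n → Fin s := fun k => (hrange (k : ℕ) ω).choose with hv
    have hvspec : ∀ k : Fin n, ψk (k : ℕ) ω = ((d (v k) ((k:ℕ)+1) : ℤ) : ℝ) :=
      fun k => (hrange (k : ℕ) ω).choose_spec
    have hSveq : (∑ k ∈ Finset.range n, ψk k ω / (s:ℝ)^(k+1)) = Sv v := by
      rw [Finset.sum_range (fun k => ψk k ω / (s:ℝ)^(k+1))]
      exact Finset.sum_congr rfl (fun k _ => by rw [hvspec k])
    have hψω : ψ ω = Sv v + T ω := by rw [hsplit ω, hSveq]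
    refine Set.mem_iUnion.2 ⟨v, ?_, ?_⟩
    · refine Set.mem_biInter (fun i hi => ?_)
      have hi' : i < n := Finset.mem_range.1 hi
      show ψk i ω = cv v i
      rw [hcvlt v i hi']
      exact hvspec ⟨i, hi'⟩
    · show T ω ∈ Set.Ico (a - Sv v) (a + 1/(s:ℝ)^n - Sv v)
      rw [hψω] at h1 h2
      exact Set.mem_Ico.2 ⟨by linarith, by linarith⟩
  -- measurability
  have hAmeas : ∀ v, MeasurableSet[mA] (A v) := by
    intro v
    refine MeasurableSet.biInter (Finset.range n).countable_toSet (fun i hi => ?_)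
    have hi' : i ∈ t := Finset.mem_range.1 hi
    have hmAi : Measurable[mA] (ψk i) :=
      measurable_iff_comap_le.2 (le_iSup₂
        (f := fun (j : ℕ) (_ : j ∈ t) => MeasurableSpace.comap (ψk j) inferInstance) i hi')
    exact hmAi (measurableSet_singleton (cv v i))
  have hBmeas : ∀ v, MeasurableSet[mB] (B v) := fun v => hTmB measurableSet_Ico
  have hmul : ∀ v, ℙ (A v ∩ B v) = ℙ (A v) * ℙ (B v) := fun v =>
    (Indep_iff mA mB ℙ).1 hIndep _ _ (hAmeas v) (hBmeas v)
  -- measure of A v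
  have hAval : ∀ v, ℙ (A v) = (1/(s:ℝ≥0∞))^n := by
    intro v
    have hprod := hindep.meas_biInter (S := Finset.range n)
      (s := fun i => {ω | ψk i ω = cv v i})
      (fun i _ => ⟨{cv v i}, measurableSet_singleton _, rfl⟩)
    calc ℙ (A v) = ∏ i ∈ Finset.range n, ℙ {ω | ψk i ω = cv v i} := hprod
      _ = ∏ _i ∈ Finset.range n, (1/(s:ℝ≥0∞)) := Finset.prod_congr rfl (fun i hi => by
            have hi' : i < n := Finset.mem_range.1 hi
            rw [hcvlt v i hi', hval (v ⟨i, hi'⟩) i])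
      _ = (1/(s:ℝ≥0∞))^n := by rw [Finset.prod_const, Finset.card_range]
  -- separation of the B v
  have hNinj := kenyonN_inj s hs d (fun m => (hres m).injective) n
  have hSvdiff : ∀ v w : Fin n → Fin s, v ≠ w → 1/(s:ℝ)^n ≤ |Sv v - Sv w| := by
    intro v w hvw
    have hv' : ((kenyonN s d n v : ℤ) : ℝ) = (s:ℝ)^n * Sv v := kenyonN_eq s hs d n v
    have hw' : ((kenyonN s d n w : ℤ) : ℝ) = (s:ℝ)^n * Sv w := kenyonN_eq s hs d n w
    have hne : kenyonN s d n v ≠ kenyonN s d n w := fun h => hvw (hNinj h)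
    have h1 : (1:ℝ) ≤ |((kenyonN s d n v : ℤ) : ℝ) - ((kenyonN s d n w : ℤ) : ℝ)| := by
      have h2 := Int.one_le_abs (sub_ne_zero.2 hne)
      calc (1:ℝ) = ((1:ℤ):ℝ) := by norm_num
        _ ≤ ((|kenyonN s d n v - kenyonN s d n w| : ℤ) : ℝ) := by exact_mod_cast h2
        _ = |((kenyonN s d n v : ℤ) : ℝ) - ((kenyonN s d n w : ℤ) : ℝ)| := by
            rw [Int.cast_abs, Int.cast_sub]
    have hdiff : Sv v - Sv w
        = (((kenyonN s d n v : ℤ) : ℝ) - ((kenyonN s d n w : ℤ) : ℝ)) / (s:ℝ)^n := by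
      rw [eq_div_iff (ne_of_gt hpowpos), hv', hw']; ring
    rw [hdiff, abs_div, abs_of_pos hpowpos]
    gcongr
  have hdisj : Pairwise (Function.onFun Disjoint B) := by
    intro v w hvw
    rw [Function.onFun, Set.disjoint_left]
    intro ω h1v h1w
    have hv1 : a - Sv v ≤ T ω ∧ T ω < a + 1/(s:ℝ)^n - Sv v := h1v
    have hw1 : a - Sv w ≤ T ω ∧ T ω < a + 1/(s:ℝ)^n - Sv w := h1w
    have hd := hSvdiff v w hvw
    rcases abs_cases (Sv v - Sv w) with ⟨he, _⟩ | ⟨he, _⟩ <;> rw [he] at hd <;>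
      linarith [hv1.1, hv1.2, hw1.1, hw1.2]
  have hBsum : ∑ v : Fin n → Fin s, ℙ (B v) ≤ 1 := by
    have hU := hU' B hdisj (fun v => (hTmB.mono hmBle le_rfl) measurableSet_Ico)
    rw [tsum_fintype] at hU
    rw [hU]
    exact prob_le_one
  -- measure of E
  have hPE : ℙ E ≤ (1/(s:ℝ≥0∞))^n := by
    calc ℙ E ≤ ℙ (⋃ v : Fin n → Fin s, A v ∩ B v) := measure_mono hcover
      _ ≤ ∑' v : Fin n → Fin s, ℙ (A v ∩ B v) := measure_iUnion_le _
      _ = ∑ v : Fin n → Fin s, ℙ (A v ∩ B v) := tsum_fintype _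
      _ = ∑ v : Fin n → Fin s, (1/(s:ℝ≥0∞))^n * ℙ (B v) :=
          Finset.sum_congr rfl (fun v _ => by rw [hmul v, hAval v])
      _ = (1/(s:ℝ≥0∞))^n * ∑ v : Fin n → Fin s, ℙ (B v) := by rw [Finset.mul_sum]
      _ ≤ (1/(s:ℝ≥0∞))^n * 1 := mul_le_mul_right hBsum _
      _ = (1/(s:ℝ≥0∞))^n := mul_one _
  have hsne : ((s:ℝ≥0∞)) ≠ 0 := by
    exact_mod_cast (by omega : s ≠ 0)
  have hstop : (1/(s:ℝ≥0∞)) ≠ ⊤ := by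
    rw [one_div]; exact ENNReal.inv_ne_top.2 hsne
  have hEreal : (ℙ E).toReal ≤ 1/(s:ℝ)^n := by
    have h2 := ENNReal.toReal_mono (ENNReal.pow_ne_top hstop) hPE
    rwa [ENNReal.toReal_pow, ENNReal.toReal_div, ENNReal.toReal_one,
      ENNReal.toReal_natCast, one_div_pow] at h2
  -- CDF bound
  have hsubset : {ω | ψ ω < a + 1/(s:ℝ)^n} ⊆ {ω | ψ ω < a} ∪ E := by
    intro ω hω
    by_cases hc : ψ ω < a
    · exact Or.inl hc
    · exact Or.inr ⟨le_of_not_gt hc, hω⟩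
  have hmono2 : ℙ {ω | ψ ω < a + 1/(s:ℝ)^n} ≤ ℙ {ω | ψ ω < a} + ℙ E :=
    (measure_mono hsubset).trans (measure_union_le _ _)
  have hfin1 : ℙ {ω | ψ ω < a} ≠ ⊤ := measure_ne_top _ _
  have hfinE : ℙ E ≠ ⊤ := measure_ne_top _ _
  have hto : (ℙ {ω | ψ ω < a + 1/(s:ℝ)^n}).toReal
      ≤ (ℙ {ω | ψ ω < a}).toReal + (ℙ E).toReal := by
    have h3 := ENNReal.toReal_mono (ENNReal.add_ne_top.2 ⟨hfin1, hfinE⟩) hmono2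
    rwa [ENNReal.toReal_add hfin1 hfinE] at h3
  rw [hF, hF, hb]
  linarith [hto, hEreal]
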